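/- Let k be a field of characteristic 2, n ≥ 1, and S = k[z₀,…,zₙ,x,y] the polynomial ring over k in the variables z₀,…,zₙ,x,y. Then there do not exist homogeneous polynomials u, v ∈ S of degree 1 such that the ideal (u², v²) equals the ideal (x·y, x²+y²). In particular, in characteristic 2 the ideals (x²,y²) and (xy, x²+y²) are not linearly equivalent. -/
import Mathlib

open MvPolynomial in
/-- In `S = k[z₀,…,zₙ,x,y]` with `char k = 2`, there are no linear forms `u, v` with
`(u², v²) = (x·y, x²+y²)`; in particular in characteristic two the ideals `(x², y²)` and
`(xy, x²+y²)` are not linearly equivalent. -/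
theorem stmt7 {k : Type*} [Field k] [CharP k 2] (n : ℕ) (hn : 1 ≤ n) :
    ¬ ∃ u v : MvPolynomial (Fin (n + 1) ⊕ Fin 2) k,
        u.IsHomogeneous 1 ∧ v.IsHomogeneous 1 ∧
        Ideal.span {u ^ 2, v ^ 2} =
          Ideal.span {(X (Sum.inr 0) : MvPolynomial (Fin (n + 1) ⊕ Fin 2) k) * X (Sum.inr 1),
            X (Sum.inr 0) ^ 2 + X (Sum.inr 1) ^ 2} := by
  rintro ⟨u, v, -, -, h⟩
  have h2 : (2 : MvPolynomial (Fin (n + 1) ⊕ Fin 2) k) = 0 := by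
    have := CharP.cast_eq_zero (MvPolynomial (Fin (n + 1) ⊕ Fin 2) k) 2
    exact_mod_cast this
  -- xy ∈ span {u², v²}
  have hxy : (X (Sum.inr 0) : MvPolynomial (Fin (n + 1) ⊕ Fin 2) k) * X (Sum.inr 1) ∈
      Ideal.span {u ^ 2, v ^ 2} := by
    rw [h]; exact Ideal.subset_span (by simp)
  obtain ⟨p, q, hpq⟩ := Ideal.mem_span_pair.mp hxy
  -- derivatives of squares vanish in characteristic two
  have hsq : ∀ w : MvPolynomial (Fin (n + 1) ⊕ Fin 2) k,
      pderiv (Sum.inr 1) (w ^ 2) = 0 := by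
    intro w
    rw [pderiv_pow]
    push_cast
    rw [h2]
    ring
  -- apply ∂/∂y to the equation
  have hx : (X (Sum.inr 0) : MvPolynomial (Fin (n + 1) ⊕ Fin 2) k) ∈
      Ideal.span {u ^ 2, v ^ 2} := by
    have hd := congrArg (pderiv (Sum.inr 1)) hpq
    simp only [map_add, pderiv_mul, hsq, mul_zero, add_zero, pderiv_X,
      Pi.single_eq_same, Pi.single_eq_of_ne (show (Sum.inr 0 : Fin (n+1) ⊕ Fin 2) ≠ Sum.inr 1 by
        simp [Fin.ext_iff]), mul_one, zero_mul, zero_add] at hd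
    rw [← hd]
    exact Ideal.add_mem _
      (Ideal.mul_mem_left _ _ (Ideal.subset_span (by simp)))
      (Ideal.mul_mem_left _ _ (Ideal.subset_span (by simp)))
  rw [h, Ideal.mem_span_pair] at hx
  obtain ⟨a, b, hab⟩ := hx
  -- evaluate x ↦ X, everything else ↦ 0
  have hev := congrArg (aeval (fun i : Fin (n + 1) ⊕ Fin 2 =>
    if i = Sum.inr 0 then (Polynomial.X : Polynomial k) else 0)) hab
  simp only [map_add, map_mul, map_pow, aeval_X, if_pos rfl, if_true,
    if_neg (show (Sum.inr 1 : Fin (n + 1) ⊕ Fin 2) ≠ Sum.inr 0 by simp [Fin.ext_iff])] at hev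
  rw [mul_zero, mul_zero, zero_add, zero_pow two_ne_zero, add_zero] at hev
  have hc := congrArg (fun f : Polynomial k => f.coeff 1) hev
  beta_reduce at hc
  rw [Polynomial.coeff_mul_X_pow'] at hc
  norm_num at hc
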